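/- For every ε > 0 and K ≥ 1 there exists n ≥ 1 such that: if (x_i)_{i=1}^n is a sequence of norm one vectors in the Schreier space X₁ which is K-equivalent to the unit vector basis of ℓ₁ⁿ, then there exists a vector x of X₁-norm 1 in the span of (x_i) with ‖x‖_∞ < ε. -/

import Mathlib

/-- The Schreier-space norm on finitely supported sequences:
`‖∑ aᵢeᵢ‖ = sup_{E ∈ S₁} |∑_{i∈E} aᵢ|`, where `S₁ = {F : |F| ≤ min F}`.  (For a
finitely supported `a` it suffices to take admissible `E` inside the support.) -/
noncomputable def schNorm (a : ℕ →₀ ℝ) : ℝ :=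
  ((a.support.powerset).filter (fun E => ∀ n ∈ E, E.card ≤ n)).sup'
    ⟨∅, by simp⟩ (fun E => |∑ i ∈ E, a i|)

/-- The supremum norm `‖∑ aᵢeᵢ‖_∞ = sup_i |aᵢ|` of a finitely supported sequence. -/
noncomputable def supNorm (a : ℕ →₀ ℝ) : ℝ :=
  (insert 0 a.support).sup' (Finset.insert_nonempty _ _) (fun i => |a i|)

open Finset

lemma schNorm_sum_le (a : ℕ →₀ ℝ) (E : Finset ℕ) (hE : E ⊆ a.support)
    (hadm : ∀ n ∈ E, E.card ≤ n) : |∑ i ∈ E, a i| ≤ schNorm a := by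
  unfold schNorm
  refine Finset.le_sup' (fun E => |∑ i ∈ E, a i|) ?_
  simp only [Finset.mem_filter, Finset.mem_powerset]
  exact ⟨hE, hadm⟩

lemma schNorm_nonneg (a : ℕ →₀ ℝ) : 0 ≤ schNorm a := by
  have := schNorm_sum_le a ∅ (by simp) (by simp)
  simpa using this

lemma abs_apply_le_schNorm (a : ℕ →₀ ℝ) (k : ℕ) (hk : 1 ≤ k) : |a k| ≤ schNorm a := by
  by_cases h : k ∈ a.support
  · have := schNorm_sum_le a {k} (by simpa using h) (by simpa using hk)
    simpa using this
  · simp only [Finsupp.notMem_support_iff] at h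
    simp [h, schNorm_nonneg a]

lemma schNorm_smul (t : ℝ) (a : ℕ →₀ ℝ) (ht : t ≠ 0) :
    schNorm (t • a) = |t| * schNorm a := by
  have hsupp : (t • a).support = a.support := Finsupp.support_smul_eq ht
  unfold schNorm
  have h1 : ((t • a).support.powerset.filter (fun E => ∀ n ∈ E, E.card ≤ n))
      = (a.support.powerset.filter (fun E => ∀ n ∈ E, E.card ≤ n)) := by rw [hsupp]
  refine (Finset.sup'_congr _ h1 (g := fun E => |t| * |∑ i ∈ E, a i|)
    (fun E _ => by simp [Finsupp.smul_apply, ← Finset.mul_sum, abs_mul])).trans ?_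
  exact (Finset.comp_sup'_eq_sup'_comp _ (fun x : ℝ => |t| * x)
    (fun x y => by
      rcases le_total x y with h | h
      · rw [max_eq_right h,
          max_eq_right (by nlinarith [abs_nonneg t] : |t| * x ≤ |t| * y)]
      · rw [max_eq_left h,
          max_eq_left (by nlinarith [abs_nonneg t] : |t| * y ≤ |t| * x)])).symm



lemma exists_null_vector {n : ℕ} {J : Type*} [Fintype J] (φ : J → Fin n → ℝ)
    (A : Finset (Fin n)) (h : Fintype.card J + A.card < n) :
    ∃ v : Fin n → ℝ, v ≠ 0 ∧ (∀ j, ∑ i, φ j i * v i = 0) ∧ ∀ i ∈ A, v i = 0 := by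
  classical
  let L : (Fin n → ℝ) →ₗ[ℝ] (J → ℝ) × (A → ℝ) :=
    (LinearMap.pi fun j => ∑ i, φ j i • LinearMap.proj i).prod
      (LinearMap.pi fun i : A => LinearMap.proj i.1)
  have hni : ¬ Function.Injective L := by
    intro hinj
    have hle := LinearMap.finrank_le_finrank_of_injective hinj
    simp only [Module.finrank_pi, Module.finrank_prod, Fintype.card_fin,
      Fintype.card_coe] at hle
    omega
  rw [← LinearMap.ker_eq_bot] at hni
  obtain ⟨v, hv, hv0⟩ := (Submodule.ne_bot_iff _).mp hni
  refine ⟨v, hv0, ?_, ?_⟩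
  · intro j
    have := congrFun (congrArg Prod.fst hv) j
    simpa [L, LinearMap.pi_apply, LinearMap.sum_apply, LinearMap.smul_apply,
      smul_eq_mul] using this
  · intro i hi
    have := congrFun (congrArg Prod.snd hv) ⟨i, hi⟩
    simpa [L] using this

lemma push_step {n : ℕ} (c v : Fin n → ℝ) (hc : ∀ i, |c i| ≤ 1) (hv : v ≠ 0)
    (hvA : ∀ i, |c i| = 1 → v i = 0) :
    ∃ t : ℝ, 0 ≤ t ∧ (∀ i, |c i + t * v i| ≤ 1) ∧ ∃ i, v i ≠ 0 ∧ |c i + t * v i| = 1 := by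
  classical
  set s : Finset (Fin n) := univ.filter (fun i => v i ≠ 0) with hs
  have hsne : s.Nonempty := by
    obtain ⟨i, hi⟩ := Function.ne_iff.mp hv
    exact ⟨i, by simpa [hs] using hi⟩
  set tf : Fin n → ℝ := fun i => if 0 < v i then (1 - c i) / v i else (-1 - c i) / v i with htf
  have hlt : ∀ i ∈ s, |c i| < 1 := by
    intro i hi
    rcases lt_or_eq_of_le (hc i) with h | h
    · exact h
    · exact absurd (hvA i h) (by simpa [hs] using hi)
  have htfpos : ∀ i ∈ s, 0 < tf i := by
    intro i hi
    have hvi : v i ≠ 0 := by simpa [hs] using hi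
    have h1 := abs_lt.mp (hlt i hi)
    rcases lt_or_gt_of_ne hvi with h | h
    · simp only [htf, if_neg (by linarith : ¬ 0 < v i)]
      exact div_pos_of_neg_of_neg (by linarith) h
    · simp only [htf, if_pos h]
      exact div_pos (by linarith) h
  set t := s.inf' hsne tf with ht
  have htpos : 0 < t := (Finset.lt_inf'_iff hsne).mpr htfpos
  refine ⟨t, le_of_lt htpos, ?_, ?_⟩
  · intro i
    by_cases hvi : v i = 0
    · simpa [hvi] using hc i
    · have his : i ∈ s := by simp [hs, hvi]
      have hti : t ≤ tf i := Finset.inf'_le tf his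
      have h1 := abs_lt.mp (hlt i his)
      rcases lt_or_gt_of_ne hvi with h | h
      · -- v i < 0
        have htf' : tf i = (-1 - c i) / v i := by simp [htf, not_lt_of_gt h]
        rw [abs_le]
        constructor
        · have : tf i * v i ≤ t * v i := by
            exact mul_le_mul_of_nonpos_right hti (le_of_lt h)
          have : (-1 - c i) ≤ t * v i := by
            rw [htf'] at this; rwa [div_mul_cancel₀] at this; exact ne_of_lt h
          linarith
        · nlinarith
      · -- 0 < v i
        have htf' : tf i = (1 - c i) / v i := by simp [htf, h]
        rw [abs_le]
        constructor
        · nlinarith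
        · have : t * v i ≤ tf i * v i := mul_le_mul_of_nonneg_right hti (le_of_lt h)
          have : t * v i ≤ 1 - c i := by
            rw [htf'] at this; rwa [div_mul_cancel₀] at this; exact ne_of_gt h
          linarith
  · obtain ⟨i, his, hieq⟩ := Finset.exists_mem_eq_inf' hsne tf
    have hvi : v i ≠ 0 := by simpa [hs] using his
    refine ⟨i, hvi, ?_⟩
    rcases lt_or_gt_of_ne hvi with h | h
    · have : t * v i = -1 - c i := by
        rw [ht, hieq]
        simp only [htf, if_neg (not_lt_of_gt h)]
        exact div_mul_cancel₀ _ (ne_of_lt h)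
      rw [show c i + t * v i = -1 by linarith]
      simp
    · have : t * v i = 1 - c i := by
        rw [ht, hieq]
        simp only [htf, if_pos h]
        exact div_mul_cancel₀ _ (ne_of_gt h)
      rw [show c i + t * v i = 1 by linarith]
      simp

lemma exists_flat_aux {n : ℕ} {J : Type*} [Fintype J] (φ : J → Fin n → ℝ) :
    ∀ (k : ℕ) (c : Fin n → ℝ), (∀ j, ∑ i, φ j i * c i = 0) → (∀ i, |c i| ≤ 1) →
      n ≤ k + (univ.filter (fun i => |c i| = 1)).card →
      ∃ c' : Fin n → ℝ, (∀ j, ∑ i, φ j i * c' i = 0) ∧ (∀ i, |c' i| ≤ 1) ∧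
        n ≤ Fintype.card J + (univ.filter (fun i => |c' i| = 1)).card := by
  classical
  intro k
  induction k with
  | zero =>
    intro c h1 h2 h3
    exact ⟨c, h1, h2, by omega⟩
  | succ k ih =>
    intro c h1 h2 h3
    by_cases hdone : n ≤ Fintype.card J + (univ.filter (fun i => |c i| = 1)).card
    · exact ⟨c, h1, h2, hdone⟩
    · push_neg at hdone
      set A : Finset (Fin n) := univ.filter (fun i => |c i| = 1) with hA
      obtain ⟨v, hv0, hvc, hvA⟩ := exists_null_vector φ A (by omega)
      obtain ⟨t, htnn, hbd, i₀, hvi₀, heq⟩ := push_step c v h2 hv0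
        (fun i hi => hvA i (by simp [hA, hi]))
      have hsub : A ⊆ univ.filter (fun i => |c i + t * v i| = 1) := by
        intro i hi
        have hiA : |c i| = 1 := by simpa [hA] using hi
        have : v i = 0 := hvA i hi
        simp [this, hiA]
      have hnot : i₀ ∉ A := by
        intro hi
        exact hvi₀ (hvA i₀ hi)
      have hcard : A.card + 1 ≤ (univ.filter (fun i => |c i + t * v i| = 1)).card := by
        have : insert i₀ A ⊆ univ.filter (fun i => |c i + t * v i| = 1) := by
          intro i hi
          rcases Finset.mem_insert.mp hi with h | h
          · subst h; simp [heq]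
          · exact hsub h
        calc A.card + 1 = (insert i₀ A).card := (Finset.card_insert_of_notMem hnot).symm
          _ ≤ _ := Finset.card_le_card this
      apply ih (fun i => c i + t * v i)
      · intro j
        have := h1 j
        have h2' := hvc j
        calc ∑ i, φ j i * (c i + t * v i)
            = (∑ i, φ j i * c i) + t * ∑ i, φ j i * v i := by
              rw [Finset.mul_sum, ← Finset.sum_add_distrib]; congr 1; ext i; ring
          _ = 0 := by rw [this, h2']; ring
      · exact hbd
      · omega

lemma exists_flat {n : ℕ} {J : Type*} [Fintype J] (φ : J → Fin n → ℝ) :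
    ∃ c : Fin n → ℝ, (∀ j, ∑ i, φ j i * c i = 0) ∧ (∀ i, |c i| ≤ 1) ∧
      (n : ℝ) - Fintype.card J ≤ ∑ i, |c i| := by
  classical
  obtain ⟨c, h1, h2, h3⟩ := exists_flat_aux φ n 0 (by simp) (by simp) (by simp)
  refine ⟨c, h1, h2, ?_⟩
  set A : Finset (Fin n) := univ.filter (fun i => |c i| = 1) with hA
  have hsum : (A.card : ℝ) ≤ ∑ i, |c i| := by
    calc (A.card : ℝ) = ∑ i ∈ A, |c i| := by
          rw [Finset.sum_congr rfl (fun i hi => by simpa [hA] using hi : ∀ i ∈ A, |c i| = 1)]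
          simp
      _ ≤ ∑ i, |c i| :=
          Finset.sum_le_sum_of_subset_of_nonneg (Finset.subset_univ A)
            (fun i _ _ => abs_nonneg _)
  have : (n : ℝ) ≤ Fintype.card J + A.card := by exact_mod_cast h3
  linarith



lemma popular_card {n : ℕ} (t : ℕ) (S : Fin n → Finset ℕ) (M : ℕ)
    (hS : ∀ i, (S i).card ≤ M) :
    t * (((univ.biUnion S)).filter
      (fun k => t ≤ (univ.filter (fun i => k ∈ S i)).card)).card ≤ n * M := by
  classical
  set U := univ.biUnion S with hU
  set C := U.filter (fun k => t ≤ (univ.filter (fun i => k ∈ S i)).card) with hC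
  have key : ∑ k ∈ U, (univ.filter (fun i : Fin n => k ∈ S i)).card = ∑ i, (S i).card := by
    have : ∀ k, (univ.filter (fun i : Fin n => k ∈ S i)).card
        = ∑ i, (if k ∈ S i then 1 else 0) := by
      intro k; rw [Finset.card_filter]
    simp_rw [this]
    rw [Finset.sum_comm]
    apply Finset.sum_congr rfl
    intro i _
    rw [← Finset.card_filter]
    congr 1
    ext k
    simp only [Finset.mem_filter, hU, Finset.mem_biUnion]
    exact ⟨fun h => h.2, fun h => ⟨⟨i, Finset.mem_univ i, h⟩, h⟩⟩
  calc t * C.card = ∑ _k ∈ C, t := by rw [Finset.sum_const, smul_eq_mul, mul_comm]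
    _ ≤ ∑ k ∈ C, (univ.filter (fun i : Fin n => k ∈ S i)).card := by
        apply Finset.sum_le_sum
        intro k hk
        exact (Finset.mem_filter.mp hk).2
    _ ≤ ∑ k ∈ U, (univ.filter (fun i : Fin n => k ∈ S i)).card := by
        apply Finset.sum_le_sum_of_subset (Finset.filter_subset _ _)
    _ = ∑ i, (S i).card := key
    _ ≤ ∑ _i : Fin n, M := Finset.sum_le_sum (fun i _ => hS i)
    _ = n * M := by simp [mul_comm]

lemma bigset_card_le (a : ℕ →₀ ℝ) (ha : schNorm a = 1) (δ : ℝ) (hδ : 0 < δ)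
    (m₀ : ℕ) (hm : 1 < (m₀ : ℝ) * δ) :
    (a.support.filter (fun k => 1 ≤ k ∧ δ ≤ |a k|)).card ≤ 3 * m₀ := by
  classical
  set P := a.support.filter (fun k => m₀ ≤ k ∧ δ ≤ a k) with hP
  set Q := a.support.filter (fun k => m₀ ≤ k ∧ a k ≤ -δ) with hQ
  have hPc : P.card ≤ m₀ := by
    by_contra h
    push_neg at h
    obtain ⟨E, hEP, hEc⟩ := Finset.exists_subset_card_eq (le_of_lt h)
    have hEsupp : E ⊆ a.support := hEP.trans (Finset.filter_subset _ _)
    have hadm : ∀ k ∈ E, E.card ≤ k := by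
      intro k hk
      rw [hEc]
      exact (Finset.mem_filter.mp (hEP hk)).2.1
    have hle := schNorm_sum_le a E hEsupp hadm
    rw [ha] at hle
    have hge : (m₀ : ℝ) * δ ≤ ∑ i ∈ E, a i := by
      calc (m₀ : ℝ) * δ = ∑ _i ∈ E, δ := by rw [Finset.sum_const, hEc]; simp [mul_comm]
        _ ≤ ∑ i ∈ E, a i := Finset.sum_le_sum
            (fun i hi => (Finset.mem_filter.mp (hEP hi)).2.2)
    have : ∑ i ∈ E, a i ≤ |∑ i ∈ E, a i| := le_abs_self _
    linarith
  have hQc : Q.card ≤ m₀ := by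
    by_contra h
    push_neg at h
    obtain ⟨E, hEP, hEc⟩ := Finset.exists_subset_card_eq (le_of_lt h)
    have hEsupp : E ⊆ a.support := hEP.trans (Finset.filter_subset _ _)
    have hadm : ∀ k ∈ E, E.card ≤ k := by
      intro k hk
      rw [hEc]
      exact (Finset.mem_filter.mp (hEP hk)).2.1
    have hle := schNorm_sum_le a E hEsupp hadm
    rw [ha] at hle
    have hge : ∑ i ∈ E, a i ≤ -((m₀:ℝ) * δ) := by
      calc ∑ i ∈ E, a i ≤ ∑ _i ∈ E, -δ := Finset.sum_le_sum
            (fun i hi => (Finset.mem_filter.mp (hEP hi)).2.2)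
        _ = -((m₀:ℝ) * δ) := by rw [Finset.sum_const, hEc]; simp [mul_comm]
    have : -(∑ i ∈ E, a i) ≤ |∑ i ∈ E, a i| := neg_le_abs _
    linarith
  have hsub : a.support.filter (fun k => 1 ≤ k ∧ δ ≤ |a k|) ⊆ (range m₀ ∪ P) ∪ Q := by
    intro k hk
    obtain ⟨hks, _hk1, hkδ⟩ := Finset.mem_filter.mp hk
    simp only [Finset.mem_union, Finset.mem_range]
    by_cases hkm : k < m₀
    · left; left; exact hkm
    · push_neg at hkm
      rcases le_or_gt 0 (a k) with h | h
      · left; right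
        exact Finset.mem_filter.mpr ⟨hks, hkm, by rwa [abs_of_nonneg h] at hkδ⟩
      · right
        refine Finset.mem_filter.mpr ⟨hks, hkm, ?_⟩
        rw [abs_of_neg h] at hkδ
        linarith
  calc (a.support.filter (fun k => 1 ≤ k ∧ δ ≤ |a k|)).card
      ≤ ((range m₀ ∪ P) ∪ Q).card := Finset.card_le_card hsub
    _ ≤ (range m₀ ∪ P).card + Q.card := Finset.card_union_le _ _
    _ ≤ ((range m₀).card + P.card) + Q.card := by
        exact Nat.add_le_add_right (Finset.card_union_le _ _) _
    _ ≤ m₀ + m₀ + m₀ := by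
        have := Finset.card_range m₀
        omega
    _ = 3 * m₀ := by ring

set_option maxHeartbeats 2000000 in
/-- For every `ε > 0` and `K ≥ 1` there is `n` such that any sequence of `n`
norm-one vectors of the Schreier space `X₁` which is `K`-equivalent to the unit
vector basis of `ℓ₁ⁿ` admits a norm-one vector in its span of sup norm `< ε`. -/
theorem exists_small_supNorm_in_span :
    ∀ ε > (0 : ℝ), ∀ K : ℝ, 1 ≤ K → ∃ n : ℕ, 1 ≤ n ∧
      ∀ x : Fin n → (ℕ →₀ ℝ),
        (∀ i, schNorm (x i) = 1) →
        (∀ a : Fin n → ℝ,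
          (1 / K) * ∑ i, |a i| ≤ schNorm (∑ i, a i • x i) ∧
            schNorm (∑ i, a i • x i) ≤ ∑ i, |a i|) →
        ∃ c : Fin n → ℝ,
          schNorm (∑ i, c i • x i) = 1 ∧ supNorm (∑ i, c i • x i) < ε := by
  classical
  intro ε hε K hK
  have hK0 : (0:ℝ) < K := lt_of_lt_of_le one_pos hK
  set δ : ℝ := ε / (4 * K) with hδdef
  have hδ : 0 < δ := by positivity
  set m₀ : ℕ := ⌈1/δ⌉₊ + 1 with hm₀def
  have hm₀ : 1 < (m₀ : ℝ) * δ := by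
    have h1 : (1/δ : ℝ) ≤ ⌈1/δ⌉₊ := Nat.le_ceil _
    have : (m₀ : ℝ) = (⌈1/δ⌉₊ : ℝ) + 1 := by push_cast [hm₀def]; ring
    rw [this]
    have : (1/δ + 1) * δ ≤ ((⌈1/δ⌉₊ : ℝ) + 1) * δ := by nlinarith
    have h2 : (1/δ + 1) * δ = 1 + δ := by field_simp
    nlinarith
  set M : ℕ := 3 * m₀ with hMdef
  set tn : ℕ := 2 * M with htndef
  set r : ℕ := ⌈2 * (tn:ℝ) * K / ε⌉₊ with hrdef
  set n : ℕ := 2 * (r + 2) with hndef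
  refine ⟨n, by omega, ?_⟩
  intro x hx hKeq
  set S : Fin n → Finset ℕ :=
    fun i => (x i).support.filter (fun k => 1 ≤ k ∧ δ ≤ |x i k|) with hSdef
  have hS : ∀ i, (S i).card ≤ M := fun i => bigset_card_le (x i) (hx i) δ hδ m₀ hm₀
  set C : Finset ℕ := ((univ.biUnion S)).filter
      (fun k => tn ≤ (univ.filter (fun i => k ∈ S i)).card) with hCdef
  have hCcard : 2 * C.card ≤ n := by
    have h1 := popular_card tn S M hS
    have hm₀pos : 1 ≤ m₀ := by omega
    have : 2 * C.card * M ≤ n * M := by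
      calc 2 * C.card * M = tn * C.card := by rw [htndef]; ring
        _ ≤ n * M := h1
    exact Nat.le_of_mul_le_mul_right this (by omega)
  set C' : Finset ℕ := insert 0 C with hC'def
  have hC'card : C'.card ≤ r + 3 := by
    rw [hC'def]
    have := Finset.card_insert_le 0 C
    omega
  obtain ⟨c, hc1, hc2, hc3⟩ := exists_flat (J := ↥C') (fun j i => x i (j : ℕ))
  set L : ℝ := ∑ i, |c i| with hLdef
  have hcardJ : (Fintype.card ↥C' : ℝ) = C'.card := by rw [Fintype.card_coe]
  have hL : 2 * (tn:ℝ) * K / ε + 1 ≤ L := by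
    have h1 : (n : ℝ) - C'.card ≤ L := by rw [← hcardJ]; exact hc3
    have h2 : (C'.card : ℝ) ≤ r + 3 := by exact_mod_cast hC'card
    have h3 : (n : ℝ) = 2 * r + 4 := by rw [hndef]; push_cast; ring
    have h4 : (2 * (tn:ℝ) * K / ε) ≤ r := Nat.le_ceil _
    linarith
  have htnpos : (0:ℝ) < tn := by
    have : 1 ≤ tn := by omega
    exact_mod_cast Nat.lt_of_lt_of_le Nat.zero_lt_one this
  have hL1 : (1:ℝ) ≤ L := by
    have : (0:ℝ) ≤ 2 * (tn:ℝ) * K / ε := by positivity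
    linarith
  set z : ℕ →₀ ℝ := ∑ i, c i • x i with hzdef
  have hzk : ∀ k, z k = ∑ i, c i * x i k := by
    intro k
    rw [hzdef, Finsupp.finset_sum_apply]
    apply Finset.sum_congr rfl
    intro i _
    rw [Finsupp.smul_apply, smul_eq_mul]
  set N : ℝ := schNorm z with hNdef
  have hN : L / K ≤ N := by
    have := (hKeq c).1
    rw [← hzdef] at this
    calc L / K = (1/K) * L := by ring
      _ ≤ N := this
  have hNpos : 0 < N :=
    lt_of_lt_of_le (div_pos (lt_of_lt_of_le one_pos hL1) hK0) hN
  -- the final coefficients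
  refine ⟨fun i => (1/N) * c i, ?_, ?_⟩
  · have hy : ∑ i, ((1/N) * c i) • x i = (1/N) • z := by
      rw [hzdef, Finset.smul_sum]
      apply Finset.sum_congr rfl
      intro i _
      rw [smul_smul]
    rw [hy, schNorm_smul _ _ (ne_of_gt (one_div_pos.mpr hNpos)), ← hNdef,
      abs_of_pos (one_div_pos.mpr hNpos)]
    field_simp
  · have hy : ∑ i, ((1/N) * c i) • x i = (1/N) • z := by
      rw [hzdef, Finset.smul_sum]
      apply Finset.sum_congr rfl
      intro i _
      rw [smul_smul]
    rw [hy]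
    -- pointwise bound
    have hzC : ∀ k ∈ C', z k = 0 := by
      intro k hk
      have := hc1 ⟨k, hk⟩
      rw [hzk]
      rw [← this]
      apply Finset.sum_congr rfl
      intro i _
      ring
    have hbound : ∀ k : ℕ, |((1/N) • z) k| < ε := by
      intro k
      have hzval : ((1/N) • z) k = (1/N) * z k := by
        rw [Finsupp.smul_apply, smul_eq_mul]
      by_cases hkC : k ∈ C'
      · rw [hzval, hzC k hkC]
        simpa using hε
      · have hk0 : k ≠ 0 := by
          intro h
          exact hkC (by rw [h, hC'def]; exact Finset.mem_insert_self _ _)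
        have hk1 : 1 ≤ k := Nat.one_le_iff_ne_zero.mpr hk0
        have hkC2 : k ∉ C := fun h => hkC (by rw [hC'def]; exact Finset.mem_insert_of_mem h)
        set F : Finset (Fin n) := univ.filter (fun i => k ∈ S i) with hFdef
        have hFcard : F.card ≤ tn := by
          by_contra h
          push_neg at h
          apply hkC2
          rw [hCdef]
          refine Finset.mem_filter.mpr ⟨?_, le_of_lt h⟩
          have hFne : F.Nonempty := Finset.card_pos.mp (by omega)
          obtain ⟨i, hi⟩ := hFne
          exact Finset.mem_biUnion.mpr ⟨i, Finset.mem_univ i, by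
            simpa [hFdef] using hi⟩
        have hsplit : |z k| ≤ tn + δ * L := by
          rw [hzk]
          calc |∑ i, c i * x i k| ≤ ∑ i, |c i * x i k| := Finset.abs_sum_le_sum_abs _ _
            _ = ∑ i ∈ F, |c i * x i k| + ∑ i ∈ univ.filter (fun i => ¬ k ∈ S i),
                |c i * x i k| := by
                rw [hFdef, Finset.sum_filter_add_sum_filter_not]
            _ ≤ (tn : ℝ) + δ * L := by
                have h1 : ∑ i ∈ F, |c i * x i k| ≤ (tn : ℝ) := by
                  calc ∑ i ∈ F, |c i * x i k| ≤ ∑ _i ∈ F, 1 := by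
                        apply Finset.sum_le_sum
                        intro i _
                        rw [abs_mul]
                        have ha := hc2 i
                        have hb : |x i k| ≤ 1 := by
                          have := abs_apply_le_schNorm (x i) k hk1
                          rwa [hx i] at this
                        nlinarith [abs_nonneg (c i), abs_nonneg (x i k)]
                    _ = F.card := by simp
                    _ ≤ (tn : ℝ) := by exact_mod_cast hFcard
                have h2 : ∑ i ∈ univ.filter (fun i => ¬ k ∈ S i), |c i * x i k|
                    ≤ δ * L := by
                  calc ∑ i ∈ univ.filter (fun i => ¬ k ∈ S i), |c i * x i k|
                      ≤ ∑ i ∈ univ.filter (fun i => ¬ k ∈ S i), δ * |c i| := by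
                        apply Finset.sum_le_sum
                        intro i hi
                        have hkS : k ∉ S i := (Finset.mem_filter.mp hi).2
                        have hxik : |x i k| ≤ δ := by
                          by_cases hsupp : k ∈ (x i).support
                          · by_contra hcon
                            push_neg at hcon
                            exact hkS (Finset.mem_filter.mpr
                              ⟨hsupp, hk1, le_of_lt hcon⟩)
                          · rw [Finsupp.notMem_support_iff] at hsupp
                            rw [hsupp]
                            simpa using le_of_lt hδ
                        rw [abs_mul, mul_comm]
                        exact mul_le_mul hxik (le_refl _) (abs_nonneg _) (le_of_lt hδ)
                    _ ≤ ∑ i, δ * |c i| := by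
                        apply Finset.sum_le_sum_of_subset_of_nonneg
                          (Finset.filter_subset _ _)
                        intro i _ _
                        positivity
                    _ = δ * L := by rw [hLdef, Finset.mul_sum]
                linarith
        rw [hzval, abs_mul, abs_of_pos (one_div_pos.mpr hNpos)]
        -- (1/N) * |z k| < ε
        have hNL : L ≤ K * N := by
          have h := hN
          rw [div_le_iff₀ hK0] at h
          linarith
        have hδL : δ * L = ε * L / (4 * K) := by rw [hδdef]; ring
        have hεL : 2 * (tn:ℝ) * K + ε ≤ ε * L := by
          have h := mul_le_mul_of_nonneg_left hL (le_of_lt hε)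
          have he : ε * (2 * (tn:ℝ) * K / ε + 1) = 2 * (tn:ℝ) * K + ε := by
            field_simp
          linarith [he ▸ h]
        have hεN : ε * L / K ≤ ε * N := by
          rw [div_le_iff₀ hK0]
          nlinarith [hNL, hε.le]
        have key : (tn : ℝ) + δ * L < ε * N := by
          have h1 : (tn:ℝ) + δ * L < ε * L / K := by
            rw [hδL, lt_div_iff₀ hK0]
            have h2 : (ε * L / (4*K)) * K = ε * L / 4 := by field_simp
            rw [add_mul, h2]
            nlinarith [hεL, mul_pos htnpos hK0, hε]
          linarith
        rw [div_mul_eq_mul_div, div_lt_iff₀ hNpos, one_mul]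
        calc |z k| ≤ (tn : ℝ) + δ * L := hsplit
          _ < ε * N := key
    unfold supNorm
    rw [Finset.sup'_lt_iff]
    intro k _
    exact hbound k
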